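/- Let G₁ and G₂ be nilpotent groups and ψ : G₁ → G₂ a group homomorphism. If the map induced by ψ on first integral group homology H₁(G₁;ℤ) → H₁(G₂;ℤ) (equivalently, the induced map on abelianizations G₁ᵃᵇ → G₂ᵃᵇ) is an isomorphism, and the map induced by ψ on second integral group homology H₂(G₁;ℤ) → H₂(G₂;ℤ) (group homology with trivial ℤ coefficients) is surjective, then ψ is an isomorphism of groups. -/

import Mathlib

open scoped Pointwise
open scoped commutatorElement


/-!
Group homology with trivial `ℤ` coefficients via Hopf's formula, using the canonical
presentation of a group `G` as a quotient of the free group on (the underlying set of)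
`G` itself: if `G = F/R` with `F` free, then `H₂(G;ℤ) ≅ (R ⊓ [F,F]) / [F,R]`, and
`H₁(G;ℤ) ≅ Gᵃᵇ`.  Both identifications are natural in `G`, so a homomorphism
`ψ : G₁ →* G₂` induces `Abelianization.map ψ` on `H₁` and, on `H₂`, the map obtained
from `FreeGroup.map ψ` after quotienting by `[F,R]` and restricting to the Hopf
subgroup `(R ⊓ [F,F]) / [F,R]`.
-/

/-- The canonical surjection from the free group on the underlying set of `G` onto `G`. -/
def freeProj (G : Type*) [Group G] : FreeGroup G →* G := FreeGroup.lift id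

/-- The relation subgroup `R = ker (freeProj G)` of the canonical presentation of `G`. -/
def relSubgroup (G : Type*) [Group G] : Subgroup (FreeGroup G) := (freeProj G).ker

instance (G : Type*) [Group G] : (relSubgroup G).Normal := (freeProj G).normal_ker

/-- The subgroup `[F, R]` of the free group `F` on the underlying set of `G`. -/
def commRel (G : Type*) [Group G] : Subgroup (FreeGroup G) :=
  ⁅(⊤ : Subgroup (FreeGroup G)), relSubgroup G⁆

instance (G : Type*) [Group G] : (commRel G).Normal :=
  Subgroup.commutator_normal ⊤ (relSubgroup G)

/-- Hopf's description of `H₂(G;ℤ)`: the subgroup `(R ⊓ [F,F]) / [F,R]` of `F / [F,R]`. -/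
def hopfH2 (G : Type*) [Group G] : Subgroup (FreeGroup G ⧸ commRel G) :=
  (relSubgroup G ⊓ commutator (FreeGroup G)).map (QuotientGroup.mk' (commRel G))

theorem freeProj_naturality {G₁ G₂ : Type*} [Group G₁] [Group G₂] (ψ : G₁ →* G₂) :
    (freeProj G₂).comp (FreeGroup.map ψ) = ψ.comp (freeProj G₁) :=
  FreeGroup.ext_hom _ _ fun a => by simp [freeProj]

theorem relSubgroup_map_le {G₁ G₂ : Type*} [Group G₁] [Group G₂] (ψ : G₁ →* G₂) :
    (relSubgroup G₁).map (FreeGroup.map ψ) ≤ relSubgroup G₂ := by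
  rintro x ⟨y, hy, rfl⟩
  have : freeProj G₂ (FreeGroup.map ψ y) = ψ (freeProj G₁ y) :=
    DFunLike.congr_fun (freeProj_naturality ψ) y
  simp only [relSubgroup, MonoidHom.mem_ker] at hy ⊢
  rw [this, hy, map_one]

theorem commRel_map_le {G₁ G₂ : Type*} [Group G₁] [Group G₂] (ψ : G₁ →* G₂) :
    (commRel G₁).map (FreeGroup.map ψ) ≤ commRel G₂ := by
  rw [commRel, Subgroup.map_commutator]
  exact Subgroup.commutator_mono le_top (relSubgroup_map_le ψ)

/-- The map induced by `ψ : G₁ →* G₂` on `F / [F,R]`; by Hopf's formula, its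
restriction to `hopfH2 G₁` is the map `H₂(G₁;ℤ) → H₂(G₂;ℤ)` induced by `ψ` on second
group homology with trivial `ℤ` coefficients. -/
def hopfMap {G₁ G₂ : Type*} [Group G₁] [Group G₂] (ψ : G₁ →* G₂) :
    (FreeGroup G₁ ⧸ commRel G₁) →* (FreeGroup G₂ ⧸ commRel G₂) :=
  QuotientGroup.map _ _ (FreeGroup.map ψ)
    (Subgroup.map_le_iff_le_comap.mp (commRel_map_le ψ))

section StallingsAux

open Subgroup

theorem freeProj_surjective (G : Type*) [Group G] : Function.Surjective (freeProj G) :=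
  fun g => ⟨FreeGroup.of g, by simp [freeProj]⟩

theorem lcs_map_eq {G H : Type*} [Group G] [Group H] {f : G →* H}
    (hf : Function.Surjective f) (n : ℕ) :
    ((⊤ : Subgroup G).lowerCentralSeries n).map f = (⊤ : Subgroup H).lowerCentralSeries n := by
  induction n with
  | zero => simpa using Subgroup.map_top_of_surjective f hf
  | succ n ih =>
      have e1 : (⊤ : Subgroup G).lowerCentralSeries (n + 1) = ⁅(⊤ : Subgroup G).lowerCentralSeries n, ⊤⁆ := rfl
      have e2 : (⊤ : Subgroup H).lowerCentralSeries (n + 1) = ⁅(⊤ : Subgroup H).lowerCentralSeries n, ⊤⁆ := rfl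
      rw [e1, e2, Subgroup.map_commutator, ih, Subgroup.map_top_of_surjective f hf]

/-- `sgrp G k` is the preimage `π⁻¹(γ_k G)` of the lower central series inside the free
group on `G`. -/
def sgrp (G : Type*) [Group G] (k : ℕ) : Subgroup (FreeGroup G) :=
  relSubgroup G ⊔ (⊤ : Subgroup (FreeGroup G)).lowerCentralSeries k

instance (G : Type*) [Group G] (k : ℕ) : (sgrp G k).Normal := Subgroup.sup_normal _ _

theorem map_sgrp (G : Type*) [Group G] (k : ℕ) :
    (sgrp G k).map (freeProj G) = (⊤ : Subgroup G).lowerCentralSeries k := by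
  have h0 : (relSubgroup G).map (freeProj G) = ⊥ := by
    rw [eq_bot_iff]
    rintro x ⟨y, hy, rfl⟩
    simpa [relSubgroup] using hy
  rw [sgrp, Subgroup.map_sup, lcs_map_eq (freeProj_surjective G), h0, bot_sup_eq]

theorem mem_sgrp {G : Type*} [Group G] {k : ℕ} {x : FreeGroup G} :
    x ∈ sgrp G k ↔ freeProj G x ∈ (⊤ : Subgroup G).lowerCentralSeries k := by
  constructor
  · intro hx
    rw [← map_sgrp G k]
    exact Subgroup.mem_map_of_mem _ hx
  · intro hx
    rw [← lcs_map_eq (freeProj_surjective G) k] at hx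
    obtain ⟨c, hc, hcx⟩ := hx
    have hr : x * c⁻¹ ∈ relSubgroup G := by
      simp [relSubgroup, MonoidHom.mem_ker, hcx]
    have e : x = x * c⁻¹ * c := by group
    rw [e]
    exact mul_mem ((le_sup_left : relSubgroup G ≤ sgrp G k) hr)
      ((le_sup_right : (⊤ : Subgroup (FreeGroup G)).lowerCentralSeries k ≤ sgrp G k) hc)

theorem commutator_mul_central_left {Q : Type*} [Group Q] (x y s : Q)
    (hs : ∀ g : Q, g * s = s * g) : ⁅x * s, y⁆ = ⁅x, y⁆ := by
  simp only [commutatorElement_def, mul_inv_rev, mul_assoc]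
  rw [← mul_assoc s y, ← hs y, mul_assoc y s, mul_inv_cancel_left]

theorem commutator_mul_central_right {Q : Type*} [Group Q] (x y t : Q)
    (ht : ∀ g : Q, g * t = t * g) : ⁅x, y * t⁆ = ⁅x, y⁆ := by
  simp only [commutatorElement_def, mul_inv_rev, mul_assoc]
  rw [← mul_assoc t x⁻¹, ← ht x⁻¹, mul_assoc x⁻¹ t, mul_inv_cancel_left]

theorem mk_central {H : Type*} [Group H] (S : Subgroup H) [S.Normal]
    {s : H} (hs : s ∈ S) (g : H ⧸ ⁅(⊤ : Subgroup H), S⁆) :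
    g * (QuotientGroup.mk' ⁅(⊤ : Subgroup H), S⁆) s =
      (QuotientGroup.mk' ⁅(⊤ : Subgroup H), S⁆) s * g := by
  obtain ⟨h, rfl⟩ := QuotientGroup.mk'_surjective _ g
  have h1 : (QuotientGroup.mk' ⁅(⊤ : Subgroup H), S⁆) ⁅h, s⁆ = 1 :=
    (QuotientGroup.eq_one_iff _).mpr
      (Subgroup.commutator_mem_commutator (Subgroup.mem_top h) hs)
  rw [map_commutatorElement] at h1
  exact (commutatorElement_eq_one_iff_commute.mp h1).eq

theorem lift_congr_commutatorElement {F H : Type*} [Group F] [Group H] (α α' : F →* H)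
    (S : Subgroup H) [S.Normal] (h : ∀ w : F, α w * (α' w)⁻¹ ∈ S) (a b : F) :
    α ⁅a, b⁆ * (α' ⁅a, b⁆)⁻¹ ∈ ⁅(⊤ : Subgroup H), S⁆ := by
  have conjmem : ∀ u : F, (α' u)⁻¹ * (α u * (α' u)⁻¹) * α' u ∈ S := by
    intro u
    have := Subgroup.Normal.conj_mem (inferInstance : S.Normal) _ (h u) (α' u)⁻¹
    rwa [inv_inv] at this
  have decomp : ∀ u : F, α u = α' u * ((α' u)⁻¹ * (α u * (α' u)⁻¹) * α' u) := by
    intro u; group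
  have key : (QuotientGroup.mk' ⁅(⊤ : Subgroup H), S⁆) (α ⁅a, b⁆) =
      (QuotientGroup.mk' ⁅(⊤ : Subgroup H), S⁆) (α' ⁅a, b⁆) := by
    have ha : (QuotientGroup.mk' ⁅(⊤ : Subgroup H), S⁆) (α a) =
        (QuotientGroup.mk' ⁅(⊤ : Subgroup H), S⁆) (α' a) *
          (QuotientGroup.mk' ⁅(⊤ : Subgroup H), S⁆) ((α' a)⁻¹ * (α a * (α' a)⁻¹) * α' a) := by
      rw [← map_mul, ← decomp a]
    have hb : (QuotientGroup.mk' ⁅(⊤ : Subgroup H), S⁆) (α b) =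
        (QuotientGroup.mk' ⁅(⊤ : Subgroup H), S⁆) (α' b) *
          (QuotientGroup.mk' ⁅(⊤ : Subgroup H), S⁆) ((α' b)⁻¹ * (α b * (α' b)⁻¹) * α' b) := by
      rw [← map_mul, ← decomp b]
    rw [map_commutatorElement, map_commutatorElement, ha, hb,
      commutator_mul_central_left _ _ _ (fun g => mk_central S (conjmem a) g),
      commutator_mul_central_right _ _ _ (fun g => mk_central S (conjmem b) g),
      map_commutatorElement, map_commutatorElement]
  have h1 : (QuotientGroup.mk' ⁅(⊤ : Subgroup H), S⁆) (α ⁅a, b⁆ * (α' ⁅a, b⁆)⁻¹) = 1 := by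
    rw [map_mul, map_inv, key, mul_inv_cancel]
  exact (QuotientGroup.eq_one_iff _).mp h1

theorem lift_congr {F H : Type*} [Group F] [Group H] (α α' : F →* H) (S : Subgroup H)
    [S.Normal] (h : ∀ w : F, α w * (α' w)⁻¹ ∈ S) {w : F} (hw : w ∈ commutator F) :
    α w * (α' w)⁻¹ ∈ ⁅(⊤ : Subgroup H), S⁆ := by
  rw [commutator_def, Subgroup.commutator_def] at hw
  induction hw using Subgroup.closure_induction with
  | mem x hx =>
      obtain ⟨a, -, b, -, rfl⟩ := hx
      exact lift_congr_commutatorElement α α' S h a b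
  | one => rw [map_one, map_one, inv_one, mul_one]; exact one_mem _
  | mul x y hx hy px py =>
      have e : α (x * y) * (α' (x * y))⁻¹ =
          (α x * (α y * (α' y)⁻¹) * (α x)⁻¹) * (α x * (α' x)⁻¹) := by
        simp only [map_mul, mul_inv_rev]; group
      rw [e]
      exact mul_mem (Subgroup.Normal.conj_mem inferInstance _ py (α x)) px
  | inv x hx px =>
      have e : α x⁻¹ * (α' x⁻¹)⁻¹ = (α x)⁻¹ * (α x * (α' x)⁻¹)⁻¹ * ((α x)⁻¹)⁻¹ := by
        simp only [map_inv]; group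
      rw [e]
      exact Subgroup.Normal.conj_mem inferInstance _ (inv_mem px) (α x)⁻¹

end StallingsAux

theorem stallings_surjective {G₁ G₂ : Type*} [Group G₁] [Group G₂]
    [Group.IsNilpotent G₂] (ψ : G₁ →* G₂)
    (h1s : Function.Surjective (Abelianization.map ψ)) : Function.Surjective ψ := by
  have hRange : ∀ k : ℕ, ψ.range ⊔ (⊤ : Subgroup G₂).lowerCentralSeries k = ⊤ := by
    intro k
    induction k with
    | zero => simp
    | succ k ih =>
      rcases Nat.eq_zero_or_pos k with rfl | hk
      · rw [lowerCentralSeries_one, eq_top_iff]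
        intro g _
        obtain ⟨x, hx⟩ := h1s (Abelianization.of g)
        obtain ⟨g₁, rfl⟩ : ∃ g₁, Abelianization.of g₁ = x :=
          QuotientGroup.mk'_surjective (commutator G₁) x
        have hx' : ((ψ g₁ : G₂) : G₂ ⧸ commutator G₂) = ((g : G₂) : G₂ ⧸ commutator G₂) := hx
        have hmem : (ψ g₁)⁻¹ * g ∈ commutator G₂ := QuotientGroup.eq.mp hx'
        have e : g = ψ g₁ * ((ψ g₁)⁻¹ * g) := by group
        rw [e]
        exact mul_mem ((le_sup_left : ψ.range ≤ _) ⟨g₁, rfl⟩)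
          ((le_sup_right : commutator G₂ ≤ _) hmem)
      · set N := (⊤ : Subgroup G₂).lowerCentralSeries (k + 1) with hN
        have hsucc : N = ⁅(⊤ : Subgroup G₂).lowerCentralSeries k, ⊤⁆ := rfl
        have hqs : Function.Surjective (QuotientGroup.mk' N) := QuotientGroup.mk'_surjective N
        have hcentral : ∀ z ∈ (⊤ : Subgroup G₂).lowerCentralSeries k, ∀ g : G₂ ⧸ N,
            g * (QuotientGroup.mk' N) z = (QuotientGroup.mk' N) z * g := by
          intro z hz g
          obtain ⟨s, rfl⟩ := hqs g
          have hmem : ⁅s, z⁆ ∈ N := by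
            rw [hsucc, Subgroup.commutator_comm]
            exact Subgroup.commutator_mem_commutator (Subgroup.mem_top s) hz
          have h1 : (QuotientGroup.mk' N) ⁅s, z⁆ = 1 := (QuotientGroup.eq_one_iff _).mpr hmem
          rw [map_commutatorElement] at h1
          exact (commutatorElement_eq_one_iff_commute.mp h1).eq
        haveI hZN : (((⊤ : Subgroup G₂).lowerCentralSeries k).map (QuotientGroup.mk' N)).Normal := by
          constructor
          rintro _ ⟨z, hz, rfl⟩ g
          rw [hcentral z hz g, mul_assoc, mul_inv_cancel, mul_one]
          exact Subgroup.mem_map_of_mem _ hz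
        have hsup : ψ.range.map (QuotientGroup.mk' N) ⊔
            ((⊤ : Subgroup G₂).lowerCentralSeries k).map (QuotientGroup.mk' N) = ⊤ := by
          rw [← Subgroup.map_sup, ih, Subgroup.map_top_of_surjective _ hqs]
        have hcomm : commutator (G₂ ⧸ N) ≤ ψ.range.map (QuotientGroup.mk' N) := by
          rw [commutator_def, Subgroup.commutator_le]
          intro a ha' b hb'
          have ha : a ∈ (ψ.range.map (QuotientGroup.mk' N) : Set (G₂ ⧸ N)) *
              (((⊤ : Subgroup G₂).lowerCentralSeries k).map (QuotientGroup.mk' N) : Set (G₂ ⧸ N)) := by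
            rw [← Subgroup.mul_normal, hsup]
            exact Subgroup.mem_top a
          have hb : b ∈ (ψ.range.map (QuotientGroup.mk' N) : Set (G₂ ⧸ N)) *
              (((⊤ : Subgroup G₂).lowerCentralSeries k).map (QuotientGroup.mk' N) : Set (G₂ ⧸ N)) := by
            rw [← Subgroup.mul_normal, hsup]
            exact Subgroup.mem_top b
          rw [Set.mem_mul] at ha hb
          obtain ⟨a₁, ha₁, _, ⟨z, hz, rfl⟩, rfl⟩ := ha
          obtain ⟨b₁, hb₁, _, ⟨w, hw, rfl⟩, rfl⟩ := hb
          rw [commutator_mul_central_left _ _ _ (hcentral z hz),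
            commutator_mul_central_right _ _ _ (hcentral w hw), commutatorElement_def]
          exact mul_mem (mul_mem (mul_mem ha₁ hb₁) (inv_mem ha₁)) (inv_mem hb₁)
        have hZle : ((⊤ : Subgroup G₂).lowerCentralSeries k).map (QuotientGroup.mk' N) ≤
            ψ.range.map (QuotientGroup.mk' N) := by
          calc ((⊤ : Subgroup G₂).lowerCentralSeries k).map (QuotientGroup.mk' N)
              ≤ (⊤ : Subgroup (G₂ ⧸ N)).lowerCentralSeries k := lowerCentralSeries.map _ k
            _ ≤ (⊤ : Subgroup (G₂ ⧸ N)).lowerCentralSeries 1 := Subgroup.lowerCentralSeries_antitone _ hk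
            _ ≤ ψ.range.map (QuotientGroup.mk' N) := by
                rw [lowerCentralSeries_one]; exact hcomm
        have htop : ψ.range.map (QuotientGroup.mk' N) = ⊤ :=
          le_antisymm le_top (le_trans (le_of_eq hsup.symm) (sup_le le_rfl hZle))
        rw [eq_top_iff]
        intro g _
        have hg : (QuotientGroup.mk' N) g ∈ ψ.range.map (QuotientGroup.mk' N) := by
          rw [htop]; exact Subgroup.mem_top _
        obtain ⟨g', ⟨g₁, rfl⟩, hgq⟩ := hg
        have hmem : (ψ g₁)⁻¹ * g ∈ N := QuotientGroup.eq.mp hgq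
        have e : g = ψ g₁ * ((ψ g₁)⁻¹ * g) := by group
        rw [e]
        exact mul_mem ((le_sup_left : ψ.range ≤ _) ⟨g₁, rfl⟩) ((le_sup_right : N ≤ _) hmem)
  obtain ⟨n, hn⟩ := nilpotent_iff_lowerCentralSeries.mp ‹Group.IsNilpotent G₂›
  have hr := hRange n
  rw [hn, sup_bot_eq] at hr
  exact MonoidHom.range_eq_top.mp hr

/-- Stallings: let `G₁`, `G₂` be nilpotent groups and `ψ : G₁ →* G₂` a
homomorphism.  If the map induced by `ψ` on `H₁(-;ℤ)` (equivalently, on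
abelianizations) is an isomorphism, and the map induced by `ψ` on `H₂(-;ℤ)` is
surjective (i.e. the image of `hopfH2 G₁` under `hopfMap ψ` is all of `hopfH2 G₂`),
then `ψ` is an isomorphism of groups. -/
theorem stallings {G₁ G₂ : Type*} [Group G₁] [Group G₂]
    [Group.IsNilpotent G₁] [Group.IsNilpotent G₂] (ψ : G₁ →* G₂)
    (h1 : Function.Bijective (Abelianization.map ψ))
    (h2 : hopfH2 G₂ ≤ (hopfH2 G₁).map (hopfMap ψ)) :
    Function.Bijective ψ := by
  have hψsurj : Function.Surjective ψ := stallings_surjective ψ h1.2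
  have hnat : ∀ w, freeProj G₂ (FreeGroup.map ψ w) = ψ (freeProj G₁ w) := fun w =>
    DFunLike.congr_fun (freeProj_naturality ψ) w
  obtain ⟨β, hβπ⟩ : ∃ β : FreeGroup G₂ →* FreeGroup G₁,
      ∀ w, ψ (freeProj G₁ (β w)) = freeProj G₂ w := by
    refine ⟨FreeGroup.lift fun a => FreeGroup.of (Function.surjInv hψsurj a), fun w => ?_⟩
    have hc : ψ.comp ((freeProj G₁).comp
        (FreeGroup.lift fun a => FreeGroup.of (Function.surjInv hψsurj a))) = freeProj G₂ := by
      apply FreeGroup.ext_hom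
      intro a
      simp [freeProj, Function.surjInv_eq hψsurj]
    exact DFunLike.congr_fun hc w
  have hInj : ∀ k : ℕ, ∀ g : G₁, ψ g ∈ (⊤ : Subgroup G₂).lowerCentralSeries k →
      g ∈ (⊤ : Subgroup G₁).lowerCentralSeries k := by
    intro k
    induction k with
    | zero => intro g _; exact Subgroup.mem_top g
    | succ k ih =>
      rcases Nat.eq_zero_or_pos k with rfl | hk
      · intro g hg
        have h0 : Abelianization.map ψ (Abelianization.of g) = 1 := by
          rw [Abelianization.map_of]
          exact (QuotientGroup.eq_one_iff _).mpr hg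
        have h1' : Abelianization.of g = 1 := h1.1 (by rw [h0, map_one])
        exact (QuotientGroup.eq_one_iff _).mp h1'
      · intro g hg
        -- `g` lies one step down the lower central series
        have hgk : g ∈ (⊤ : Subgroup G₁).lowerCentralSeries k :=
          ih g (Subgroup.lowerCentralSeries_antitone _ (Nat.le_succ k) hg)
        have hgc : g ∈ commutator G₁ := by
          rw [← lowerCentralSeries_one]
          exact Subgroup.lowerCentralSeries_antitone _ hk hgk
        -- lift `g` to an element of the commutator subgroup of the free group
        have hgm : g ∈ (commutator (FreeGroup G₁)).map (freeProj G₁) := by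
          rw [commutator_def, Subgroup.map_commutator,
            Subgroup.map_top_of_surjective _ (freeProj_surjective G₁), ← commutator_def]
          exact hgc
        obtain ⟨x, hxK, hxg⟩ := hgm
        have hφx : freeProj G₂ (FreeGroup.map ψ x) = ψ g := by rw [hnat, hxg]
        -- choose `c` in the free lower central series mapping to `ψ g`
        have hcex : ψ g ∈ ((⊤ : Subgroup (FreeGroup G₂)).lowerCentralSeries (k + 1)).map (freeProj G₂) := by
          rw [lcs_map_eq (freeProj_surjective G₂)]
          exact hg
        obtain ⟨c, hc, hcψ⟩ := hcex
        set w₂ := FreeGroup.map ψ x * c⁻¹ with hw₂def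
        have hw₂R : w₂ ∈ relSubgroup G₂ := by
          have hone : freeProj G₂ w₂ = 1 := by
            rw [hw₂def, map_mul, map_inv, hφx, hcψ, mul_inv_cancel]
          exact MonoidHom.mem_ker.mpr hone
        have hφxK : FreeGroup.map ψ x ∈ commutator (FreeGroup G₂) := by
          have hle : (commutator (FreeGroup G₁)).map (FreeGroup.map ψ) ≤
              commutator (FreeGroup G₂) := by
            rw [commutator_def, Subgroup.map_commutator]
            exact Subgroup.commutator_mono le_top le_top
          exact hle (Subgroup.mem_map_of_mem _ hxK)
        have hw₂K : w₂ ∈ commutator (FreeGroup G₂) := by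
          refine mul_mem hφxK (inv_mem ?_)
          rw [← lowerCentralSeries_one]
          exact Subgroup.lowerCentralSeries_antitone _ (Nat.succ_le_succ (Nat.zero_le k)) hc
        -- apply the H₂-surjectivity hypothesis
        have hmkw : (QuotientGroup.mk' (commRel G₂)) w₂ ∈ hopfH2 G₂ :=
          Subgroup.mem_map_of_mem _
            (show w₂ ∈ relSubgroup G₂ ⊓ commutator (FreeGroup G₂) from ⟨hw₂R, hw₂K⟩)
        obtain ⟨z, hz, hzw⟩ := h2 hmkw
        obtain ⟨y, hy, rfl⟩ := hz
        have hzw' : (QuotientGroup.mk' (commRel G₂)) (FreeGroup.map ψ y) =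
            (QuotientGroup.mk' (commRel G₂)) w₂ := by
          rw [← hzw, hopfMap, QuotientGroup.map_mk']
          rfl
        have hyw : (FreeGroup.map ψ y)⁻¹ * w₂ ∈ commRel G₂ := QuotientGroup.eq.mp hzw'
        -- the image of `y⁻¹ * x` lies in `[F₂, S₂]`
        have hCS2 : (FreeGroup.map ψ) (y⁻¹ * x) ∈
            ⁅(⊤ : Subgroup (FreeGroup G₂)), sgrp G₂ k⁆ := by
          have e : (FreeGroup.map ψ) (y⁻¹ * x) =
              ((FreeGroup.map ψ y)⁻¹ * w₂) * (w₂⁻¹ * FreeGroup.map ψ x) := by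
            rw [map_mul, map_inv]
            group
          rw [e]
          refine mul_mem ?_ ?_
          · exact Subgroup.commutator_mono le_rfl
              (le_sup_left : relSubgroup G₂ ≤ sgrp G₂ k) hyw
          · have ew : w₂⁻¹ * FreeGroup.map ψ x = c := by
              rw [hw₂def]; group
            rw [ew]
            have hle : (⊤ : Subgroup (FreeGroup G₂)).lowerCentralSeries (k + 1) ≤
                ⁅(⊤ : Subgroup (FreeGroup G₂)), sgrp G₂ k⁆ := by
              have e1 : (⊤ : Subgroup (FreeGroup G₂)).lowerCentralSeries (k + 1) =
                  ⁅(⊤ : Subgroup (FreeGroup G₂)).lowerCentralSeries k, ⊤⁆ := rfl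
              rw [e1, Subgroup.commutator_comm]
              exact Subgroup.commutator_mono le_rfl le_sup_right
            exact hle hc
        -- two lifts of the same map agree modulo `[F₁, S₁]` on commutators
        have hdiff : ∀ w : FreeGroup G₁,
            (β.comp (FreeGroup.map ψ)) w * ((MonoidHom.id (FreeGroup G₁)) w)⁻¹ ∈ sgrp G₁ k := by
          intro w
          apply mem_sgrp.mpr
          apply ih
          rw [map_mul, map_inv, map_mul, map_inv, MonoidHom.comp_apply, MonoidHom.id_apply,
            hβπ, hnat, mul_inv_cancel]
          exact one_mem _
        have hzK : y⁻¹ * x ∈ commutator (FreeGroup G₁) := mul_mem (inv_mem hy.2) hxK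
        have hmain := lift_congr (β.comp (FreeGroup.map ψ)) (MonoidHom.id (FreeGroup G₁))
          (sgrp G₁ k) hdiff hzK
        have hβCS : (β.comp (FreeGroup.map ψ)) (y⁻¹ * x) ∈
            ⁅(⊤ : Subgroup (FreeGroup G₁)), sgrp G₁ k⁆ := by
          have hle : (⁅(⊤ : Subgroup (FreeGroup G₂)), sgrp G₂ k⁆).map β ≤
              ⁅(⊤ : Subgroup (FreeGroup G₁)), sgrp G₁ k⁆ := by
            rw [Subgroup.map_commutator]
            refine Subgroup.commutator_mono le_top ?_
            rintro _ ⟨s, hs, rfl⟩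
            exact mem_sgrp.mpr (ih _ (by rw [hβπ]; exact mem_sgrp.mp hs))
          exact hle (Subgroup.mem_map_of_mem β hCS2)
        have hzCS : y⁻¹ * x ∈ ⁅(⊤ : Subgroup (FreeGroup G₁)), sgrp G₁ k⁆ := by
          have e : y⁻¹ * x =
              ((β.comp (FreeGroup.map ψ)) (y⁻¹ * x) *
                  ((MonoidHom.id (FreeGroup G₁)) (y⁻¹ * x))⁻¹)⁻¹ *
                (β.comp (FreeGroup.map ψ)) (y⁻¹ * x) := by
            rw [MonoidHom.id_apply]
            group
          rw [e]
          exact mul_mem (inv_mem hmain) hβCS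
        -- push down to `G₁`
        have hfin : freeProj G₁ (y⁻¹ * x) ∈ (⊤ : Subgroup G₁).lowerCentralSeries (k + 1) := by
          have hm : Subgroup.map (freeProj G₁) ⁅(⊤ : Subgroup (FreeGroup G₁)), sgrp G₁ k⁆ =
              (⊤ : Subgroup G₁).lowerCentralSeries (k + 1) := by
            have e1 : (⊤ : Subgroup G₁).lowerCentralSeries (k + 1) = ⁅(⊤ : Subgroup G₁).lowerCentralSeries k, ⊤⁆ := rfl
            rw [Subgroup.map_commutator, Subgroup.map_top_of_surjective _ (freeProj_surjective G₁),
              map_sgrp, e1, Subgroup.commutator_comm]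
          rw [← hm]
          exact Subgroup.mem_map_of_mem _ hzCS
        have hy1 : freeProj G₁ y = 1 := hy.1
        rwa [map_mul, map_inv, hy1, inv_one, one_mul, hxg] at hfin
  obtain ⟨n, hn⟩ := nilpotent_iff_lowerCentralSeries.mp ‹Group.IsNilpotent G₁›
  refine ⟨(injective_iff_map_eq_one ψ).mpr fun a ha => ?_, hψsurj⟩
  have hm := hInj n a (by rw [ha]; exact one_mem _)
  rw [hn] at hm
  exact Subgroup.mem_bot.mp hm
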